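/- Let B, B̃, C be commutative Noetherian rings. If the product rings C × B and C × B̃ are isomorphic as rings, then B and B̃ are isomorphic as rings. (Cancellation of direct factors for Noetherian rings.) -/

import Mathlib

/-- An indecomposable (connected) commutative ring: nontrivial with only trivial idempotents. -/
def IndecompRing (R : Type*) [CommRing R] : Prop :=
  Nontrivial R ∧ ∀ e : R, IsIdempotentElem e → e = 0 ∨ e = 1

/-- A primitive idempotent. -/
def IsPrimIdem (R : Type*) [CommRing R] (f : R) : Prop :=
  IsIdempotentElem f ∧ f ≠ 0 ∧ ∀ g : R, IsIdempotentElem g → g * f = g → g = 0 ∨ g = f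

section Basic
variable {R S : Type*} [CommRing R] [CommRing S]

lemma isPrimIdem_map (φ : R ≃+* S) {f : R} (hf : IsPrimIdem R f) : IsPrimIdem S (φ f) := by
  obtain ⟨h1, h2, h3⟩ := hf
  refine ⟨h1.map φ, fun h => h2 (by simpa using φ.injective (a₁ := f) (a₂ := 0) (by simpa using h)),
    fun g hg hgf => ?_⟩
  have hg' : IsIdempotentElem (φ.symm g) := hg.map φ.symm
  have hgf' : φ.symm g * f = φ.symm g := by
    have : φ.symm (g * φ f) = φ.symm g := by rw [hgf]
    simpa [map_mul] using this
  rcases h3 _ hg' hgf' with h | h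
  · left; have := congrArg φ h; simpa using this
  · right; have := congrArg φ h; simpa using this

lemma indecompRing_map (φ : R ≃+* S) (h : IndecompRing R) : IndecompRing S := by
  obtain ⟨h1, h2⟩ := h
  haveI := h1
  refine ⟨φ.symm.toEquiv.nontrivial, fun e he => ?_⟩
  rcases h2 _ (he.map φ.symm) with h | h
  · left; have := congrArg φ h; simpa using this
  · right; have := congrArg φ h; simpa using this

/-- span of `1 - k` is strictly contained in span of `1 - h` when `h ≤ k`, `h ≠ k`. -/
lemma span_one_sub_lt {h k : R} (hk : IsIdempotentElem k) (hhk : h * k = h) (hne : h ≠ k) :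
    Ideal.span ({1 - k} : Set R) < Ideal.span ({1 - h} : Set R) := by
  refine lt_of_le_of_ne ?_ fun heq => ?_
  · rw [Ideal.span_le, Set.singleton_subset_iff, SetLike.mem_coe, Ideal.mem_span_singleton]
    exact ⟨1 - k, by linear_combination -hhk⟩
  · have : (1 : R) - h ∈ Ideal.span ({1 - k} : Set R) :=
      heq ▸ Ideal.mem_span_singleton_self _
    rw [Ideal.mem_span_singleton] at this
    obtain ⟨x, hx⟩ := this
    exact hne (by linear_combination (-k) * hx + x * hk.eq - hhk)

lemma mk_self_eq_one {f : R} :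
    (Ideal.Quotient.mk (Ideal.span ({1 - f} : Set R))) f = 1 := by
  rw [← map_one (Ideal.Quotient.mk (Ideal.span ({1 - f} : Set R))), Ideal.Quotient.eq]
  simpa using neg_mem (Ideal.mem_span_singleton_self (1 - f))

/-- A primitive idempotent gives an indecomposable quotient. -/
lemma indecompRing_quot {f : R} (hf : IsPrimIdem R f) :
    IndecompRing (R ⧸ Ideal.span ({1 - f} : Set R)) := by
  obtain ⟨h1, h2, h3⟩ := hf
  have hnt : Ideal.span ({1 - f} : Set R) ≠ ⊤ := by
    intro ht
    have : (1 : R) ∈ Ideal.span ({1 - f} : Set R) := ht ▸ Submodule.mem_top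
    rw [Ideal.mem_span_singleton] at this
    obtain ⟨x, hx⟩ := this
    exact h2 (by linear_combination f * hx - x * h1.eq)
  refine ⟨Ideal.Quotient.nontrivial_iff.mpr hnt, fun e he => ?_⟩
  obtain ⟨x, rfl⟩ := Ideal.Quotient.mk_surjective e
  have hxx : (Ideal.Quotient.mk (Ideal.span ({1 - f} : Set R))) (x * x - x) = 0 := by
    rw [map_sub, map_mul, sub_eq_zero]; exact he
  rw [Ideal.Quotient.eq_zero_iff_mem, Ideal.mem_span_singleton] at hxx
  obtain ⟨y, hy⟩ := hxx
  set g : R := x * f with hg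
  have hgidem : IsIdempotentElem g := by
    show g * g = g
    rw [hg]
    linear_combination f * f * hy + (x - y * f) * h1.eq
  have hgf : g * f = g := by rw [hg, mul_assoc, h1]
  have hmkg : (Ideal.Quotient.mk (Ideal.span ({1 - f} : Set R))) g =
      Ideal.Quotient.mk _ x := by
    rw [hg, map_mul, mk_self_eq_one, mul_one]
  rcases h3 g hgidem hgf with h | h
  · left; rw [← hmkg, h, map_zero]
  · right; rw [← hmkg, h, mk_self_eq_one]

end Basic

section Decomp
variable {R : Type*} [CommRing R] [IsNoetherianRing R]

theorem exists_primitive_refinement :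
    ∀ e : R, IsIdempotentElem e →
      ∃ (ι : Type) (_ : Fintype ι) (f : ι → R), OrthogonalIdempotents f ∧
        (∑ i, f i) = e ∧ ∀ i, IsPrimIdem R (f i) := by
  have wf : WellFounded ((· > ·) : Ideal R → Ideal R → Prop) :=
    (inferInstance : WellFoundedGT (Ideal R)).wf
  intro e he
  refine wf.induction
    (C := fun I => ∀ e : R, IsIdempotentElem e → Ideal.span ({1 - e} : Set R) = I →
      ∃ (ι : Type) (_ : Fintype ι) (f : ι → R), OrthogonalIdempotents f ∧
        (∑ i, f i) = e ∧ ∀ i, IsPrimIdem R (f i))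
    (Ideal.span ({1 - e} : Set R)) ?_ e he rfl
  clear he e
  rintro I IH e he rfl
  by_cases he0 : e = 0
  · exact ⟨PEmpty, inferInstance, PEmpty.elim, ⟨fun i => i.elim, fun i => i.elim⟩,
      by simp [he0], fun i => i.elim⟩
  by_cases hp : IsPrimIdem R e
  · exact ⟨PUnit, inferInstance, fun _ => e, ⟨fun _ => he, fun i j hij => absurd rfl hij⟩,
      by simp, fun _ => hp⟩
  · -- e is not primitive: split it
    rw [IsPrimIdem, not_and_or, not_and_or] at hp
    have hp' : ∃ g : R, IsIdempotentElem g ∧ g * e = g ∧ g ≠ 0 ∧ g ≠ e := by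
      rcases hp with h | h | h
      · exact absurd he h
      · exact absurd (not_not.mp h) he0
      · push_neg at h
        obtain ⟨g, hg1, hg2, hg3, hg4⟩ := h
        exact ⟨g, hg1, hg2, hg3, hg4⟩
    obtain ⟨g, hg, hge, hg0, hgne⟩ := hp'
    set g' : R := e - g with hg'
    have hgg' : g * g' = 0 := by rw [hg']; linear_combination hge - hg.eq
    have hg'idem : IsIdempotentElem g' := by
      show g' * g' = g'; rw [hg']; linear_combination he.eq - 2 * hge + hg.eq
    have hg'e : g' * e = g' := by rw [hg']; linear_combination he.eq - hge
    have hg'ne : g' ≠ e := by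
      rw [hg']; intro hh; exact hg0 (by linear_combination -hh)
    have hlt1 : Ideal.span ({1 - e} : Set R) < Ideal.span ({1 - g} : Set R) :=
      span_one_sub_lt he hge hgne
    have hlt2 : Ideal.span ({1 - e} : Set R) < Ideal.span ({1 - g'} : Set R) :=
      span_one_sub_lt he hg'e hg'ne
    obtain ⟨ι₁, _, f₁, hf₁, hs₁, hprim₁⟩ := IH _ hlt1 g hg rfl
    obtain ⟨ι₂, _, f₂, hf₂, hs₂, hprim₂⟩ := IH _ hlt2 g' hg'idem rfl
    refine ⟨ι₁ ⊕ ι₂, inferInstance, Sum.elim f₁ f₂, ⟨?_, ?_⟩, ?_, ?_⟩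
    · rintro (i | i)
      · exact hf₁.idem i
      · exact hf₂.idem i
    · have key : ∀ (i : ι₁) (j : ι₂), f₁ i * f₂ j = 0 := by
        intro i j
        have h1 : f₁ i * g = f₁ i := by
          rw [← hs₁]; exact hf₁.mul_sum_of_mem (Finset.mem_univ i)
        have h2 : f₂ j * g' = f₂ j := by
          rw [← hs₂]; exact hf₂.mul_sum_of_mem (Finset.mem_univ j)
        calc f₁ i * f₂ j = (f₁ i * g) * (f₂ j * g') := by rw [h1, h2]
          _ = (f₁ i * f₂ j) * (g * g') := by ring
          _ = 0 := by rw [hgg', mul_zero]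
      rintro (i | i) (j | j) hij
      · exact hf₁.ortho (fun hh => hij (by rw [hh]))
      · exact key i j
      · rw [mul_comm]; exact key j i
      · exact hf₂.ortho (fun hh => hij (by rw [hh]))
    · rw [Fintype.sum_sum_type]
      simp only [Sum.elim_inl, Sum.elim_inr]
      rw [hs₁, hs₂, hg']; ring
    · rintro (i | i)
      · exact hprim₁ i
      · exact hprim₂ i

theorem exists_prim_decomp (R : Type*) [CommRing R] [IsNoetherianRing R] :
    ∃ (ι : Type) (_ : Fintype ι) (f : ι → R), CompleteOrthogonalIdempotents f ∧
      ∀ i, IsPrimIdem R (f i) := by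
  obtain ⟨ι, _, f, h1, h2, h3⟩ := exists_primitive_refinement (R := R) 1 IsIdempotentElem.one
  exact ⟨ι, ‹_›, f, ⟨h1, h2⟩, h3⟩

end Decomp

section Products
variable {ι : Type*} [Fintype ι] [DecidableEq ι] (A : ι → Type*) [∀ i, CommRing (A i)]

lemma delta_injective (hA : ∀ i, IndecompRing (A i)) :
    Function.Injective (fun i => (Pi.single i 1 : ∀ i, A i)) := by
  intro i j hij
  by_contra hne
  haveI := (hA i).1
  have h2 : (Pi.single i 1 : ∀ i, A i) i = (Pi.single j 1 : ∀ i, A i) i := congrFun hij i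
  rw [Pi.single_eq_same, Pi.single_eq_of_ne hne] at h2
  exact one_ne_zero h2

lemma isPrimIdem_pi_iff (hA : ∀ i, IndecompRing (A i)) (f : ∀ i, A i) :
    IsPrimIdem (∀ i, A i) f ↔ ∃ i, f = Pi.single i 1 := by
  constructor
  · rintro ⟨h1, h2, h3⟩
    have hcoord : ∀ i, f i = 0 ∨ f i = 1 := fun i => (hA i).2 (f i) (congrFun h1 i)
    have hex : ∃ i, f i = 1 := by
      by_contra hn
      push_neg at hn
      exact h2 (funext fun i => (hcoord i).resolve_right (hn i))
    obtain ⟨i, hi⟩ := hex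
    have hδ : IsIdempotentElem (Pi.single i 1 : ∀ i, A i) := by
      show _ * _ = _
      ext j
      by_cases hji : j = i
      · subst hji; simp
      · simp [Pi.single_eq_of_ne hji]
    have hδf : (Pi.single i 1 : ∀ i, A i) * f = Pi.single i 1 := by
      ext j
      by_cases hji : j = i
      · subst hji; simp [hi]
      · simp [Pi.single_eq_of_ne hji]
    have hδ0 : (Pi.single i 1 : ∀ i, A i) ≠ 0 := by
      intro hh
      haveI := (hA i).1
      have := congrFun hh i
      rw [Pi.single_eq_same] at this
      exact one_ne_zero this
    rcases h3 _ hδ hδf with h | h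
    · exact absurd h hδ0
    · exact ⟨i, h.symm⟩
  · rintro ⟨i, rfl⟩
    haveI := (hA i).1
    refine ⟨?_, ?_, ?_⟩
    · show _ * _ = _
      ext j
      by_cases hji : j = i
      · subst hji; simp
      · simp [Pi.single_eq_of_ne hji]
    · intro hh
      have := congrFun hh i
      rw [Pi.single_eq_same] at this
      exact one_ne_zero this
    · intro g hg hgδ
      have hcoord : ∀ j, j ≠ i → g j = 0 := by
        intro j hji
        have := congrFun hgδ j
        rw [Pi.mul_apply, Pi.single_eq_of_ne hji, mul_zero] at this
        exact this.symm
      rcases (hA i).2 (g i) (congrFun hg i) with h | h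
      · left
        ext j
        by_cases hji : j = i
        · subst hji; exact h
        · exact hcoord j hji
      · right
        ext j
        by_cases hji : j = i
        · subst hji; rw [h, Pi.single_eq_same]
        · rw [hcoord j hji, Pi.single_eq_of_ne hji]

/-- The quotient of a finite product by the ideal `(1 - δᵢ)` is the `i`-th factor. -/
noncomputable def quotDeltaEquiv (i : ι) :
    ((∀ j, A j) ⧸ Ideal.span ({1 - Pi.single i 1} : Set (∀ j, A j))) ≃+* A i := by
  have hker : RingHom.ker (Pi.evalRingHom A i) =
      Ideal.span ({1 - Pi.single i 1} : Set (∀ j, A j)) := by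
    ext g
    rw [RingHom.mem_ker, Ideal.mem_span_singleton]
    constructor
    · intro hg
      refine ⟨g, ?_⟩
      ext j
      by_cases hji : j = i
      · subst hji; simpa using hg
      · simp [Pi.single_eq_of_ne hji]
    · rintro ⟨c, rfl⟩
      simp [Pi.evalRingHom_apply]
  exact (Ideal.quotEquivOfEq hker.symm).trans
    (RingHom.quotientKerEquivOfSurjective (f := Pi.evalRingHom A i)
      (fun x => ⟨Pi.single i x, by simp [Pi.evalRingHom_apply]⟩))

end Products

section Key

theorem key_uniqueness {ι κ : Type} [Fintype ι] [Fintype κ]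
    (A : ι → Type*) (D : κ → Type*) [∀ i, CommRing (A i)] [∀ j, CommRing (D j)]
    (hA : ∀ i, IndecompRing (A i)) (hD : ∀ j, IndecompRing (D j))
    (φ : (∀ i, A i) ≃+* (∀ j, D j)) :
    ∃ σ : ι ≃ κ, ∀ i, Nonempty (A i ≃+* D (σ i)) := by
  classical
  have hforward : ∀ i : ι, ∃ j : κ, φ (Pi.single i 1) = Pi.single j 1 := by
    intro i
    have := isPrimIdem_map φ ((isPrimIdem_pi_iff A hA _).mpr ⟨i, rfl⟩)
    exact (isPrimIdem_pi_iff D hD _).mp this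
  have hback : ∀ j : κ, ∃ i : ι, φ.symm (Pi.single j 1) = Pi.single i 1 := by
    intro j
    have := isPrimIdem_map φ.symm ((isPrimIdem_pi_iff D hD _).mpr ⟨j, rfl⟩)
    exact (isPrimIdem_pi_iff A hA _).mp this
  choose σf hσf using hforward
  choose σb hσb using hback
  have hleft : ∀ i, σb (σf i) = i := by
    intro i
    apply delta_injective A hA
    have := hσb (σf i)
    rw [← hσf i, RingEquiv.symm_apply_apply] at this
    exact this.symm
  have hright : ∀ j, σf (σb j) = j := by
    intro j
    apply delta_injective D hD
    have := hσf (σb j)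
    rw [← hσb j, RingEquiv.apply_symm_apply] at this
    exact this.symm
  refine ⟨⟨σf, σb, hleft, hright⟩, ?_⟩
  intro i
  have hmap : Ideal.map (φ : (∀ i, A i) →+* (∀ j, D j))
      (Ideal.span ({1 - Pi.single i 1} : Set (∀ i, A i))) =
      Ideal.span ({1 - Pi.single (σf i) 1} : Set (∀ j, D j)) := by
    simp only [Ideal.map_span, Set.image_singleton, map_sub, map_one,
      RingEquiv.coe_toRingHom, hσf i]
  exact ⟨((quotDeltaEquiv A i).symm.trans
    (Ideal.quotientEquiv _ _ φ hmap.symm)).trans (quotDeltaEquiv D (σf i))⟩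

end Key

theorem comb_cancel {A X Y Z : Type*} [Fintype A] [Fintype X] [Fintype Y]
    (L : A ⊕ X → Z) (L' : A ⊕ Y → Z) (σ : (A ⊕ X) ≃ (A ⊕ Y))
    (hσ : ∀ p, L' (σ p) = L p) (hA : ∀ a, L (Sum.inl a) = L' (Sum.inl a)) :
    ∃ τ : X ≃ Y, ∀ x, L' (Sum.inr (τ x)) = L (Sum.inr x) := by
  classical
  have hcard : ∀ z : Z,
      Fintype.card {x : X // L (Sum.inr x) = z} = Fintype.card {y : Y // L' (Sum.inr y) = z} := by
    intro z
    have h1 : Fintype.card {p : A ⊕ X // L p = z} = Fintype.card {q : A ⊕ Y // L' q = z} :=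
      Fintype.card_congr (σ.subtypeEquiv (fun p => by rw [hσ]))
    have h2 : Fintype.card {p : A ⊕ X // L p = z} =
        Fintype.card {a : A // L (Sum.inl a) = z} + Fintype.card {x : X // L (Sum.inr x) = z} := by
      rw [Fintype.card_congr (Equiv.subtypeSum (p := fun p => L p = z)), Fintype.card_sum]
    have h3 : Fintype.card {q : A ⊕ Y // L' q = z} =
        Fintype.card {a : A // L' (Sum.inl a) = z} + Fintype.card {y : Y // L' (Sum.inr y) = z} := by
      rw [Fintype.card_congr (Equiv.subtypeSum (p := fun q => L' q = z)), Fintype.card_sum]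
    have h4 : Fintype.card {a : A // L (Sum.inl a) = z} =
        Fintype.card {a : A // L' (Sum.inl a) = z} :=
      Fintype.card_congr (Equiv.subtypeEquiv (Equiv.refl A) (fun a => by rw [hA]; rfl))
    omega
  have τz : ∀ z : Z, {x : X // L (Sum.inr x) = z} ≃ {y : Y // L' (Sum.inr y) = z} :=
    fun z => Classical.choice (Fintype.card_eq.mp (hcard z))
  refine ⟨((Equiv.sigmaFiberEquiv (fun x => L (Sum.inr x))).symm.trans
    ((Equiv.sigmaCongrRight τz).trans (Equiv.sigmaFiberEquiv (fun y => L' (Sum.inr y))))), ?_⟩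
  intro x
  simp only [Equiv.trans_apply]
  have h5 : (Equiv.sigmaFiberEquiv (fun x => L (Sum.inr x))).symm x =
      ⟨L (Sum.inr x), x, rfl⟩ := rfl
  rw [h5]
  exact ((τz (L (Sum.inr x))) ⟨x, rfl⟩).2

universe v

/-- Relation of ring-isomorphism on bundled commutative rings. -/
def ringRel (A B : (R : Type v) × CommRing R) : Prop :=
  letI := A.2; letI := B.2; Nonempty (A.1 ≃+* B.1)

def ringSetoid : Setoid ((R : Type v) × CommRing R) where
  r := ringRel
  iseqv := by
    refine ⟨fun A => ?_, fun {A B} h => ?_, fun {A B C} h1 h2 => ?_⟩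
    · letI := A.2; exact ⟨RingEquiv.refl _⟩
    · letI := A.2; letI := B.2
      obtain ⟨e⟩ := h
      exact ⟨e.symm⟩
    · letI := A.2; letI := B.2; letI := C.2
      obtain ⟨e1⟩ := h1; obtain ⟨e2⟩ := h2
      exact ⟨e1.trans e2⟩

def RingCls : Type (v + 1) := Quotient ringSetoid.{v}

def cls (R : Type v) [inst : CommRing R] : RingCls.{v} := Quotient.mk ringSetoid.{v} ⟨R, inst⟩

lemma cls_eq_of_iso {R S : Type v} [CommRing R] [CommRing S] (e : R ≃+* S) : cls R = cls S :=
  Quotient.sound ⟨e⟩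

lemma iso_of_cls_eq {R S : Type v} [CommRing R] [CommRing S] (h : cls R = cls S) :
    Nonempty (R ≃+* S) :=
  Quotient.exact h

/-- Ring isomorphism between a Pi over a sum type and a product of Pi types. -/
def ringEquivSumPi {ι κ : Type*} (F : ι ⊕ κ → Type*) [∀ p, NonUnitalNonAssocSemiring (F p)] :
    (∀ p, F p) ≃+* ((∀ i, F (Sum.inl i)) × (∀ j, F (Sum.inr j))) :=
  { Equiv.sumPiEquivProdPi F with map_mul' := fun _ _ => rfl, map_add' := fun _ _ => rfl }

section Final

theorem cancel_aux {B B' C : Type v} [CommRing B] [CommRing B'] [CommRing C]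
    [IsNoetherianRing B] [IsNoetherianRing B'] [IsNoetherianRing C]
    (φ : (C × B) ≃+* (C × B')) : Nonempty (B ≃+* B') := by
  classical
  obtain ⟨ιC, _, c, hc, hcp⟩ := exists_prim_decomp C
  obtain ⟨ιB, _, b, hb, hbp⟩ := exists_prim_decomp B
  obtain ⟨ιB', _, b', hb', hbp'⟩ := exists_prim_decomp B'
  -- the quotient factors
  let QC : ιC → Type v := fun i => C ⧸ Ideal.span ({1 - c i} : Set C)
  let QB : ιB → Type v := fun j => B ⧸ Ideal.span ({1 - b j} : Set B)
  let QB' : ιB' → Type v := fun k => B' ⧸ Ideal.span ({1 - b' k} : Set B')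
  letI instT : ∀ p : ιC ⊕ ιB, CommRing (Sum.elim QC QB p) := fun p =>
    match p with
    | Sum.inl i => (inferInstance : CommRing (QC i))
    | Sum.inr j => (inferInstance : CommRing (QB j))
  letI instT' : ∀ p : ιC ⊕ ιB', CommRing (Sum.elim QC QB' p) := fun p =>
    match p with
    | Sum.inl i => (inferInstance : CommRing (QC i))
    | Sum.inr k => (inferInstance : CommRing (QB' k))
  -- the decompositions
  have ΨC : C ≃+* ∀ i, QC i :=
    RingEquiv.ofBijective (Pi.ringHom fun i => Ideal.Quotient.mk _) hc.bijective_pi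
  have ΨB : B ≃+* ∀ j, QB j :=
    RingEquiv.ofBijective (Pi.ringHom fun j => Ideal.Quotient.mk _) hb.bijective_pi
  have ΨB' : B' ≃+* ∀ k, QB' k :=
    RingEquiv.ofBijective (Pi.ringHom fun k => Ideal.Quotient.mk _) hb'.bijective_pi
  have e1 : (C × B) ≃+* ∀ p, Sum.elim QC QB p :=
    (RingEquiv.prodCongr ΨC ΨB).trans (ringEquivSumPi (Sum.elim QC QB)).symm
  have e2 : (C × B') ≃+* ∀ p, Sum.elim QC QB' p :=
    (RingEquiv.prodCongr ΨC ΨB').trans (ringEquivSumPi (Sum.elim QC QB')).symm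
  have φ' : (∀ p, Sum.elim QC QB p) ≃+* ∀ p, Sum.elim QC QB' p :=
    e1.symm.trans (φ.trans e2)
  have hT : ∀ p, IndecompRing (Sum.elim QC QB p) := by
    rintro (i | j)
    · exact indecompRing_quot (hcp i)
    · exact indecompRing_quot (hbp j)
  have hT' : ∀ p, IndecompRing (Sum.elim QC QB' p) := by
    rintro (i | k)
    · exact indecompRing_quot (hcp i)
    · exact indecompRing_quot (hbp' k)
  obtain ⟨σ, hσiso⟩ := key_uniqueness (Sum.elim QC QB) (Sum.elim QC QB') hT hT' φ'
  -- labels in isomorphism classes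
  obtain ⟨τ, hτ⟩ := comb_cancel (Z := RingCls.{v})
    (fun p => cls (Sum.elim QC QB p)) (fun p => cls (Sum.elim QC QB' p)) σ
    (fun p => (cls_eq_of_iso (Classical.choice (hσiso p))).symm)
    (fun a => rfl)
  have eb : ∀ j : ιB, QB j ≃+* QB' (τ j) := fun j =>
    (Classical.choice (iso_of_cls_eq (hτ j))).symm
  exact ⟨ΨB.trans ((RingEquiv.piCongrRight eb).trans
    ((RingEquiv.piCongrLeft QB' τ).trans ΨB'.symm))⟩

theorem stmt17 {B B' C : Type*} [CommRing B] [CommRing B'] [CommRing C]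
    [IsNoetherianRing B] [IsNoetherianRing B'] [IsNoetherianRing C]
    (h : Nonempty ((C × B) ≃+* (C × B'))) : Nonempty (B ≃+* B') := by
  obtain ⟨φ⟩ := h
  haveI : IsNoetherianRing (ULift.{max u_1 u_2 u_3} B) :=
    isNoetherianRing_of_ringEquiv B ULift.ringEquiv.symm
  haveI : IsNoetherianRing (ULift.{max u_1 u_2 u_3} B') :=
    isNoetherianRing_of_ringEquiv B' ULift.ringEquiv.symm
  haveI : IsNoetherianRing (ULift.{max u_1 u_2 u_3} C) :=
    isNoetherianRing_of_ringEquiv C ULift.ringEquiv.symm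
  have e : (ULift.{max u_1 u_2 u_3} C × ULift.{max u_1 u_2 u_3} B) ≃+*
      (ULift.{max u_1 u_2 u_3} C × ULift.{max u_1 u_2 u_3} B') :=
    (RingEquiv.prodCongr ULift.ringEquiv ULift.ringEquiv).trans
      (φ.trans (RingEquiv.prodCongr ULift.ringEquiv.symm ULift.ringEquiv.symm))
  obtain ⟨ψ⟩ := cancel_aux e
  exact ⟨(ULift.ringEquiv.symm.trans ψ).trans ULift.ringEquiv⟩

end Final
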